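/- For J ≥ 0 and fields induced by summable positive sequences, the wall free energy τ̃_w is monotone: (i) if 0 ≤ J ≤ J′ then τ̃_w(J, h) ≤ τ̃_w(J′, h); (ii) if (h_ℓ) and (h′_ℓ) are summable positive sequences with h_ℓ ≤ h′_ℓ for every ℓ ≥ 1, then τ̃_w(J, h) ≤ τ̃_w(J, h′). -/

import Mathlib

open Finset Filter Real

/-- Sites of `ℤ^d`, written as `ℤ^(d-1) × ℤ`; the second coordinate is the
"vertical" (last) coordinate.  The semi-infinite lattice `H⁺` consists of the
sites whose last coordinate is `≥ 1`. -/
abbrev Site (d : ℕ) : Type := (Fin (d - 1) → ℤ) × ℤ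

/-- Nearest neighbours of a site (the `2d` sites at Euclidean distance 1). -/
def nbrs {d : ℕ} (i : Site d) : Finset (Site d) :=
  ({(i.1, i.2 + 1), (i.1, i.2 - 1)} : Finset (Site d)) ∪
    Finset.image
      (fun p : Fin (d - 1) × Bool =>
        (Function.update i.1 p.1 (i.1 p.1 + if p.2 then 1 else -1), i.2))
      Finset.univ

/-- The (±1)-valued configuration determined inside `Λ` by `τ` and equal to
the boundary condition `b` outside `Λ`. -/
noncomputable def conf {d : ℕ} (Λ : Finset (Site d)) (b : Site d → ℝ)
    (τ : {x // x ∈ Λ} → Bool) : Site d → ℝ :=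
  fun i => if h : i ∈ Λ then (if τ ⟨i, h⟩ then 1 else -1) else b i

/-- Minus the Hamiltonian of the semi-infinite Ising model in `Λ ⊆ H⁺` with
coupling `J` and external field `h`: `J·Σ σᵢσⱼ + Σ_{i∈Λ} hᵢσᵢ`, the first sum
over nearest-neighbour pairs `{i,j} ⊆ H⁺` with `{i,j} ∩ Λ ≠ ∅` (pairs inside
`Λ` are counted once via the factor 1/2). -/
noncomputable def energyH {d : ℕ} (J : ℝ) (h : Site d → ℝ) (Λ : Finset (Site d))
    (σ : Site d → ℝ) : ℝ :=
  J * ∑ i ∈ Λ, ∑ j ∈ (nbrs i).filter (fun j => 1 ≤ j.2),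
      (if j ∈ Λ then (1 : ℝ) / 2 else 1) * σ i * σ j
    + ∑ i ∈ Λ, h i * σ i

/-- Partition function of the semi-infinite Ising model. -/
noncomputable def ZH {d : ℕ} (J : ℝ) (h : Site d → ℝ) (Λ : Finset (Site d))
    (b : Site d → ℝ) : ℝ :=
  ∑ τ : {x // x ∈ Λ} → Bool, Real.exp (energyH J h Λ (conf Λ b τ))

/-- Gibbs expectation of the semi-infinite Ising model. -/
noncomputable def avgH {d : ℕ} (J : ℝ) (h : Site d → ℝ) (Λ : Finset (Site d))
    (b : Site d → ℝ) (f : (Site d → ℝ) → ℝ) : ℝ :=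
  (∑ τ : {x // x ∈ Λ} → Bool,
      f (conf Λ b τ) * Real.exp (energyH J h Λ (conf Λ b τ))) / ZH J h Λ b

/-- The box `Λₙ = [-n,n]^{d-1} × [1,n]`. -/
noncomputable def box (d : ℕ) (n : ℕ) : Finset (Site d) :=
  (Fintype.piFinset fun _ : Fin (d - 1) => Finset.Icc (-(n : ℤ)) (n : ℤ)) ×ˢ
    Finset.Icc (1 : ℤ) (n : ℤ)

/-- The reflected box `Λ'ₙ = [-n,n]^{d-1} × [-n+1,0]`. -/
noncomputable def box' (d : ℕ) (n : ℕ) : Finset (Site d) :=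
  (Fintype.piFinset fun _ : Fin (d - 1) => Finset.Icc (-(n : ℤ)) (n : ℤ)) ×ˢ
    Finset.Icc (-(n : ℤ) + 1) (0 : ℤ)

/-- `Δₙ = Λₙ ∪ Λ'ₙ`. -/
noncomputable def dbox (d : ℕ) (n : ℕ) : Finset (Site d) := box d n ∪ box' d n

/-- The wall `Wₙ = [-n,n]^{d-1} × {1}`. -/
noncomputable def wall (d : ℕ) (n : ℕ) : Finset (Site d) :=
  (Fintype.piFinset fun _ : Fin (d - 1) => Finset.Icc (-(n : ℤ)) (n : ℤ)) ×ˢ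
    ({(1 : ℤ)} : Finset ℤ)

/-- The decaying external field `(λ̂)ᵢ = λ / i_d^δ`. -/
noncomputable def lamHat (d : ℕ) (lam δ : ℝ) : Site d → ℝ :=
  fun i => lam / (i.2 : ℝ) ^ δ

/-- Plus boundary condition. -/
def plusBC (d : ℕ) : Site d → ℝ := fun _ => 1

/-- Minus boundary condition. -/
def minusBC (d : ℕ) : Site d → ℝ := fun _ => -1

/-- The finite-volume wall free energy `-|Wₙ|⁻¹ ln(Z⁻/Z⁺)`. -/
noncomputable def wallSeq (d : ℕ) (J : ℝ) (h : Site d → ℝ) (n : ℕ) : ℝ :=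
  -(((wall d n).card : ℝ))⁻¹ *
    Real.log (ZH J h (box d n) (minusBC d) / ZH J h (box d n) (plusBC d))

/-- Minus `β` times the Hamiltonian of the Ising model on `ℤ^d` in `Λ` with a
general nearest-neighbour coupling `Jc` and field `h`. -/
noncomputable def energyZ {d : ℕ} (β : ℝ) (Jc : Site d → Site d → ℝ) (h : Site d → ℝ)
    (Λ : Finset (Site d)) (σ : Site d → ℝ) : ℝ :=
  β * (∑ i ∈ Λ, ∑ j ∈ nbrs i,
      (if j ∈ Λ then (1 : ℝ) / 2 else 1) * Jc i j * σ i * σ j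
    + ∑ i ∈ Λ, h i * σ i)

/-- Partition function of the Ising model on `ℤ^d`. -/
noncomputable def ZZ {d : ℕ} (β : ℝ) (Jc : Site d → Site d → ℝ) (h : Site d → ℝ)
    (Λ : Finset (Site d)) (b : Site d → ℝ) : ℝ :=
  ∑ τ : {x // x ∈ Λ} → Bool, Real.exp (energyZ β Jc h Λ (conf Λ b τ))

/-- Gibbs expectation of the Ising model on `ℤ^d`. -/
noncomputable def avgZ {d : ℕ} (β : ℝ) (Jc : Site d → Site d → ℝ) (h : Site d → ℝ)
    (Λ : Finset (Site d)) (b : Site d → ℝ) (f : (Site d → ℝ) → ℝ) : ℝ :=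
  (∑ τ : {x // x ∈ Λ} → Bool,
      f (conf Λ b τ) * Real.exp (energyZ β Jc h Λ (conf Λ b τ))) / ZZ β Jc h Λ b

/-- The box `[-n,n]^d ⊆ ℤ^d`. -/
noncomputable def boxZ (d : ℕ) (n : ℕ) : Finset (Site d) :=
  (Fintype.piFinset fun _ : Fin (d - 1) => Finset.Icc (-(n : ℤ)) (n : ℤ)) ×ˢ
    Finset.Icc (-(n : ℤ)) (n : ℤ)

/-- Euclidean norm of a site. -/
noncomputable def enorm {d : ℕ} (i : Site d) : ℝ :=
  Real.sqrt ((∑ k, ((i.1 k : ℝ)) ^ 2) + ((i.2 : ℝ)) ^ 2)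


namespace WFE

def pm (b : Bool) : ℝ := if b then 1 else -1

lemma pm_mul_self (b : Bool) : pm b * pm b = 1 := by cases b <;> simp [pm]

lemma pm_not (b : Bool) : pm (!b) = - pm b := by cases b <;> simp [pm]

lemma pm_beq (a b : Bool) : pm (a == b) = pm a * pm b := by
  cases a <;> cases b <;> norm_num [pm]

lemma pm_cases (b : Bool) : pm b = 1 ∨ pm b = -1 := by cases b <;> simp [pm]

set_option linter.unusedSectionVars false

variable {ι : Type*} [Fintype ι] [DecidableEq ι]

noncomputable def spinProd (e : ι → ℕ) (σ : ι → Bool) : ℝ := ∏ i, (pm (σ i)) ^ (e i)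

lemma spinProd_mul_self (e : ι → ℕ) (σ : ι → Bool) : spinProd e σ * spinProd e σ = 1 := by
  rw [spinProd, ← Finset.prod_mul_distrib]
  rw [Finset.prod_congr rfl (fun i _ => by rw [← mul_pow, pm_mul_self, one_pow])]
  exact Finset.prod_const_one

lemma spinProd_cases (e : ι → ℕ) (σ : ι → Bool) : spinProd e σ = 1 ∨ spinProd e σ = -1 :=
  mul_self_eq_one_iff.mp (spinProd_mul_self e σ)

lemma spinProd_add (e f : ι → ℕ) (σ : ι → Bool) :
    spinProd (fun i => e i + f i) σ = spinProd e σ * spinProd f σ := by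
  rw [spinProd, spinProd, spinProd, ← Finset.prod_mul_distrib]
  exact Finset.prod_congr rfl (fun i _ => pow_add _ _ _)

lemma spinProd_sum {κ : Type*} (s : Finset κ) (e : κ → ι → ℕ) (σ : ι → Bool) :
    spinProd (fun i => ∑ k ∈ s, e k i) σ = ∏ k ∈ s, spinProd (e k) σ := by
  rw [spinProd]
  rw [Finset.prod_congr rfl (fun i (_ : i ∈ univ) =>
    (Finset.prod_pow_eq_pow_sum s (fun k => e k i) (pm (σ i))).symm)]
  exact Finset.prod_comm

lemma spinProd_beq (e : ι → ℕ) (x z : ι → Bool) :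
    spinProd e (fun i => x i == z i) = spinProd e x * spinProd e z := by
  rw [spinProd, spinProd, spinProd, ← Finset.prod_mul_distrib]
  exact Finset.prod_congr rfl (fun i _ => by rw [pm_beq, mul_pow])

lemma sum_spinProd_nonneg (e : ι → ℕ) : 0 ≤ ∑ σ : ι → Bool, spinProd e σ := by
  have h1 : ∑ σ : ι → Bool, spinProd e σ
      = ∏ i : ι, ∑ b : Bool, (pm b) ^ (e i) := by
    rw [Finset.prod_univ_sum (fun _ => (univ : Finset Bool)) (fun i b => (pm b) ^ (e i))]
    rw [Fintype.piFinset_univ]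
    rfl
  rw [h1]
  apply Finset.prod_nonneg
  intro i _
  have h2 : ∑ b : Bool, (pm b) ^ (e i) = 1 + (-1 : ℝ) ^ (e i) := by
    rw [Fintype.sum_bool]; simp [pm]
  rcases Nat.even_or_odd (e i) with he | ho
  · rw [h2, he.neg_one_pow]; norm_num
  · rw [h2, ho.neg_one_pow]; norm_num

lemma gks1 {κ : Type*} [DecidableEq κ] (K : Finset κ) (c : κ → ℝ)
    (hc : ∀ k ∈ K, 0 ≤ c k) (e : κ → ι → ℕ) (f : ι → ℕ) :
    0 ≤ ∑ σ : ι → Bool, spinProd f σ * ∏ k ∈ K, Real.exp (c k * spinProd (e k) σ) := by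
  have hexp : ∀ σ : ι → Bool, ∀ k ∈ K,
      Real.exp (c k * spinProd (e k) σ)
        = Real.cosh (c k) + Real.sinh (c k) * spinProd (e k) σ := by
    intro σ k _
    rcases spinProd_cases (e k) σ with h | h
    · rw [h, mul_one, mul_one, Real.cosh_add_sinh]
    · rw [h, mul_neg_one, mul_neg_one, ← sub_eq_add_neg, Real.cosh_sub_sinh]
  have hsum : ∀ σ : ι → Bool,
      spinProd f σ * ∏ k ∈ K, Real.exp (c k * spinProd (e k) σ)
      = ∑ t ∈ K.powerset, ((∏ k ∈ t, Real.cosh (c k)) * ∏ k ∈ K \ t, Real.sinh (c k))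
          * spinProd (fun i => f i + ∑ k ∈ K \ t, e k i) σ := by
    intro σ
    rw [Finset.prod_congr rfl (hexp σ), Finset.prod_add, Finset.mul_sum]
    refine Finset.sum_congr rfl (fun t _ => ?_)
    rw [spinProd_add, spinProd_sum, Finset.prod_mul_distrib]
    ring
  rw [Finset.sum_congr rfl (fun σ _ => hsum σ), Finset.sum_comm]
  apply Finset.sum_nonneg
  intro t ht
  rw [← Finset.mul_sum]
  apply mul_nonneg
  · apply mul_nonneg
    · exact Finset.prod_nonneg (fun k _ => (Real.cosh_pos (x := c k)).le)
    · exact Finset.prod_nonneg (fun k hk =>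
        Real.sinh_nonneg_iff.mpr (hc k (Finset.mem_sdiff.mp hk).1))
  · exact sum_spinProd_nonneg _

lemma master {κ : Type*} [DecidableEq κ] (K : Finset κ) (c : κ → ℝ)
    (hc : ∀ k ∈ K, 0 ≤ c k) (e : κ → ι → ℕ) (sg : κ → Bool) (f : ι → ℕ) (fs : Bool) :
    0 ≤ ∑ x : ι → Bool, ∑ y : ι → Bool,
        (spinProd f x + pm fs * spinProd f y) *
          Real.exp (∑ k ∈ K, c k * (spinProd (e k) x + pm (sg k) * spinProd (e k) y)) := by
  have hinv : ∀ x : ι → Bool, Function.Involutive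
      (fun z : ι → Bool => (fun i => x i == z i)) := by
    intro x z
    funext i
    show (x i == (x i == z i)) = z i
    cases x i <;> cases z i <;> rfl
  have hre : ∀ x : ι → Bool,
      (∑ y : ι → Bool, (spinProd f x + pm fs * spinProd f y) *
          Real.exp (∑ k ∈ K, c k * (spinProd (e k) x + pm (sg k) * spinProd (e k) y)))
      = ∑ z : ι → Bool, (1 + pm fs * spinProd f z) *
          (spinProd f x *
            Real.exp (∑ k ∈ K, (c k * (1 + pm (sg k) * spinProd (e k) z)) * spinProd (e k) x)) := by
    intro x
    rw [← Function.Bijective.sum_comp ((hinv x).bijective) _]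
    refine Finset.sum_congr rfl (fun z _ => ?_)
    beta_reduce
    have h1 : spinProd f (fun i => x i == z i) = spinProd f x * spinProd f z :=
      spinProd_beq f x z
    have h2 : ∑ k ∈ K, c k * (spinProd (e k) x + pm (sg k) * spinProd (e k) (fun i => x i == z i))
        = ∑ k ∈ K, (c k * (1 + pm (sg k) * spinProd (e k) z)) * spinProd (e k) x :=
      Finset.sum_congr rfl (fun k _ => by rw [spinProd_beq]; ring)
    rw [h1, h2]
    ring
  rw [Finset.sum_congr rfl (fun x _ => hre x), Finset.sum_comm]
  apply Finset.sum_nonneg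
  intro z _
  rw [← Finset.mul_sum]
  apply mul_nonneg
  · rcases pm_cases fs with h1 | h1 <;> rcases spinProd_cases f z with h2 | h2 <;>
      rw [h1, h2] <;> norm_num
  · have hc' : ∀ k ∈ K, 0 ≤ c k * (1 + pm (sg k) * spinProd (e k) z) := by
      intro k hk
      apply mul_nonneg (hc k hk)
      rcases pm_cases (sg k) with h1 | h1 <;> rcases spinProd_cases (e k) z with h2 | h2 <;>
        rw [h1, h2] <;> norm_num
    have h := gks1 K (fun k => c k * (1 + pm (sg k) * spinProd (e k) z)) hc' e f
    calc (0:ℝ) ≤ _ := h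
    _ = _ := by
      refine Finset.sum_congr rfl (fun x _ => ?_)
      rw [Real.exp_sum]

lemma logZ_mono {κ : Type*} [DecidableEq κ] (K : Finset κ) (e : κ → ι → ℕ) (sg : κ → Bool)
    (w v : κ → ℝ) (t₀ t₁ : ℝ) (ht : t₀ ≤ t₁)
    (hv : ∀ k ∈ K, 0 ≤ v k)
    (hw : ∀ k ∈ K, ∀ t ∈ Set.Icc t₀ t₁, 0 ≤ w k + t * v k) :
    Real.log (∑ σ : ι → Bool, Real.exp (∑ k ∈ K, (w k + t₀ * v k) * spinProd (e k) σ))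
      - Real.log (∑ σ : ι → Bool,
          Real.exp (∑ k ∈ K, (pm (sg k) * (w k + t₀ * v k)) * spinProd (e k) σ))
    ≤ Real.log (∑ σ : ι → Bool, Real.exp (∑ k ∈ K, (w k + t₁ * v k) * spinProd (e k) σ))
      - Real.log (∑ σ : ι → Bool,
          Real.exp (∑ k ∈ K, (pm (sg k) * (w k + t₁ * v k)) * spinProd (e k) σ)) := by
  classical
  set m : κ → (ι → Bool) → ℝ := fun k σ => spinProd (e k) σ with hm
  set A : (ι → Bool) → ℝ := fun σ => ∑ k ∈ K, w k * m k σ with hA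
  set B : (ι → Bool) → ℝ := fun σ => ∑ k ∈ K, v k * m k σ with hB
  set A' : (ι → Bool) → ℝ := fun σ => ∑ k ∈ K, pm (sg k) * w k * m k σ with hA'
  set B' : (ι → Bool) → ℝ := fun σ => ∑ k ∈ K, pm (sg k) * v k * m k σ with hB'
  set F : ℝ → ℝ := fun t => ∑ σ : ι → Bool, Real.exp (A σ + t * B σ) with hF
  set G : ℝ → ℝ := fun t => ∑ σ : ι → Bool, Real.exp (A' σ + t * B' σ) with hG
  have hexp1 : ∀ (t : ℝ) (σ : ι → Bool),
      ∑ k ∈ K, (w k + t * v k) * m k σ = A σ + t * B σ := by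
    intro t σ
    rw [hA, hB]
    simp only []
    rw [Finset.mul_sum, ← Finset.sum_add_distrib]
    exact Finset.sum_congr rfl (fun k _ => by ring)
  have hexp2 : ∀ (t : ℝ) (σ : ι → Bool),
      ∑ k ∈ K, (pm (sg k) * (w k + t * v k)) * m k σ = A' σ + t * B' σ := by
    intro t σ
    rw [hA', hB']
    simp only []
    rw [Finset.mul_sum, ← Finset.sum_add_distrib]
    exact Finset.sum_congr rfl (fun k _ => by ring)
  have hgoalF : ∀ t : ℝ,
      (∑ σ : ι → Bool, Real.exp (∑ k ∈ K, (w k + t * v k) * spinProd (e k) σ)) = F t :=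
    fun t => Finset.sum_congr rfl (fun σ _ => by rw [hexp1 t σ])
  have hgoalG : ∀ t : ℝ,
      (∑ σ : ι → Bool, Real.exp (∑ k ∈ K, (pm (sg k) * (w k + t * v k)) * spinProd (e k) σ)) = G t :=
    fun t => Finset.sum_congr rfl (fun σ _ => by rw [hexp2 t σ])
  have hFpos : ∀ t, 0 < F t := fun t =>
    Finset.sum_pos (fun σ _ => Real.exp_pos _) Finset.univ_nonempty
  have hGpos : ∀ t, 0 < G t := fun t =>
    Finset.sum_pos (fun σ _ => Real.exp_pos _) Finset.univ_nonempty
  have hFd : ∀ t, HasDerivAt F (∑ σ : ι → Bool, Real.exp (A σ + t * B σ) * B σ) t := by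
    intro t
    apply HasDerivAt.fun_sum
    intro σ _
    simpa using (((hasDerivAt_id t).mul_const (B σ)).const_add (A σ)).exp
  have hGd : ∀ t, HasDerivAt G (∑ σ : ι → Bool, Real.exp (A' σ + t * B' σ) * B' σ) t := by
    intro t
    apply HasDerivAt.fun_sum
    intro σ _
    simpa using (((hasDerivAt_id t).mul_const (B' σ)).const_add (A' σ)).exp
  set f : ℝ → ℝ := fun t => Real.log (F t) - Real.log (G t) with hf
  have hfd : ∀ t, HasDerivAt f
      ((∑ σ : ι → Bool, Real.exp (A σ + t * B σ) * B σ) / F t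
        - (∑ σ : ι → Bool, Real.exp (A' σ + t * B' σ) * B' σ) / G t) t := by
    intro t
    exact ((hFd t).log (hFpos t).ne').sub ((hGd t).log (hGpos t).ne')
  -- nonnegativity of the derivative on the interval
  have hkey : ∀ t ∈ Set.Icc t₀ t₁,
      0 ≤ (∑ σ : ι → Bool, Real.exp (A σ + t * B σ) * B σ) / F t
        - (∑ σ : ι → Bool, Real.exp (A' σ + t * B' σ) * B' σ) / G t := by
    intro t htI
    rw [sub_nonneg, div_le_div_iff₀ (hGpos t) (hFpos t)]
    rw [← sub_nonneg]
    have hcomb : (∑ σ : ι → Bool, Real.exp (A σ + t * B σ) * B σ) * G t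
        - (∑ σ : ι → Bool, Real.exp (A' σ + t * B' σ) * B' σ) * F t
        = ∑ k ∈ K, v k * ∑ x : ι → Bool, ∑ y : ι → Bool,
            (m k x + pm (!(sg k)) * m k y) *
              Real.exp (∑ l ∈ K, (w l + t * v l) * (m l x + pm (sg l) * m l y)) := by
      have hBdiff : ∀ x y : ι → Bool, B x - B' y
          = ∑ k ∈ K, v k * (m k x + pm (!(sg k)) * m k y) := by
        intro x y
        rw [hB, hB']
        simp only []
        rw [← Finset.sum_sub_distrib]
        exact Finset.sum_congr rfl (fun k _ => by rw [pm_not]; ring)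
      have hE : ∀ x y : ι → Bool,
          Real.exp (A x + t * B x) * Real.exp (A' y + t * B' y)
            = Real.exp (∑ l ∈ K, (w l + t * v l) * (m l x + pm (sg l) * m l y)) := by
        intro x y
        rw [← Real.exp_add]
        congr 1
        rw [hA, hB, hA', hB']
        simp only []
        rw [Finset.mul_sum, Finset.mul_sum, ← Finset.sum_add_distrib,
          ← Finset.sum_add_distrib, ← Finset.sum_add_distrib]
        exact Finset.sum_congr rfl (fun l _ => by ring)
      calc (∑ σ : ι → Bool, Real.exp (A σ + t * B σ) * B σ) * G t
          - (∑ σ : ι → Bool, Real.exp (A' σ + t * B' σ) * B' σ) * F t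
          = ∑ x : ι → Bool, ∑ y : ι → Bool,
            ((Real.exp (A x + t * B x) * B x) * Real.exp (A' y + t * B' y)
              - (Real.exp (A' y + t * B' y) * B' y) * Real.exp (A x + t * B x)) := by
            rw [hF, hG]
            simp only []
            rw [Finset.sum_mul_sum, Finset.sum_mul_sum]
            rw [Finset.sum_comm (s := (Finset.univ : Finset (ι → Bool)))
              (t := (Finset.univ : Finset (ι → Bool)))
              (f := fun σ τ => Real.exp (A' σ + t * B' σ) * B' σ * Real.exp (A τ + t * B τ))]
            rw [← Finset.sum_sub_distrib]
            exact Finset.sum_congr rfl (fun x _ => by rw [← Finset.sum_sub_distrib])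
        _ = ∑ x : ι → Bool, ∑ y : ι → Bool, ∑ k ∈ K,
              v k * ((m k x + pm (!(sg k)) * m k y) *
                Real.exp (∑ l ∈ K, (w l + t * v l) * (m l x + pm (sg l) * m l y))) := by
            refine Finset.sum_congr rfl (fun x _ => Finset.sum_congr rfl (fun y _ => ?_))
            have : (Real.exp (A x + t * B x) * B x) * Real.exp (A' y + t * B' y)
                - (Real.exp (A' y + t * B' y) * B' y) * Real.exp (A x + t * B x)
                = (B x - B' y) * (Real.exp (A x + t * B x) * Real.exp (A' y + t * B' y)) := by
              ring
            rw [this, hE, hBdiff, Finset.sum_mul]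
            exact Finset.sum_congr rfl (fun k _ => by ring)
        _ = ∑ k ∈ K, v k * ∑ x : ι → Bool, ∑ y : ι → Bool,
              (m k x + pm (!(sg k)) * m k y) *
                Real.exp (∑ l ∈ K, (w l + t * v l) * (m l x + pm (sg l) * m l y)) := by
            rw [Finset.sum_congr rfl (fun x (_ : x ∈ Finset.univ) => Finset.sum_comm)]
            rw [Finset.sum_comm]
            simp only [Finset.mul_sum]
    rw [hcomb]
    apply Finset.sum_nonneg
    intro k hk
    apply mul_nonneg (hv k hk)
    exact master K (fun l => w l + t * v l) (fun l hl => hw l hl t htI) e sg (e k) (!(sg k))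
  have hdiff : Differentiable ℝ f := fun t => (hfd t).differentiableAt
  have hmono : MonotoneOn f (Set.Icc t₀ t₁) := by
    apply monotoneOn_of_deriv_nonneg (convex_Icc t₀ t₁) hdiff.continuous.continuousOn
      (fun x _ => (hdiff x).differentiableWithinAt)
    intro x hx
    rw [(hfd x).deriv]
    exact hkey x (Set.Ioo_subset_Icc_self (by rwa [interior_Icc] at hx))
  have hm := hmono (Set.left_mem_Icc.mpr ht) (Set.right_mem_Icc.mpr ht) ht
  rw [hgoalF t₀, hgoalF t₁, hgoalG t₀, hgoalG t₁]
  exact hm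


section Application

variable {d n : ℕ}

/-- Index type for the energy terms: pair terms and field terms. -/
abbrev Kappa (d : ℕ) : Type := (Σ _ : Site d, Site d) ⊕ Site d

noncomputable def NB {d : ℕ} (i : Site d) : Finset (Site d) :=
  (nbrs i).filter (fun j => 1 ≤ j.2)

noncomputable def KK (d n : ℕ) : Finset (Kappa d) :=
  ((box d n).sigma (fun i => NB i)).disjSum (box d n)

def eK (d n : ℕ) : Kappa d → {x // x ∈ box d n} → ℕ
  | Sum.inl p => fun a =>
      (if (a : Site d) = p.1 then 1 else 0) + (if (a : Site d) = p.2 then 1 else 0)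
  | Sum.inr i => fun a => if (a : Site d) = i then 1 else 0

noncomputable def UU (d n : ℕ) (J : ℝ) (g : Site d → ℝ) : Kappa d → ℝ
  | Sum.inl p => J * (if p.2 ∈ box d n then (1 : ℝ) / 2 else 1)
  | Sum.inr i => g i

lemma spinProd_delta (τ : {x // x ∈ box d n} → Bool) (j : Site d) :
    spinProd (fun a : {x // x ∈ box d n} => if (a : Site d) = j then 1 else 0) τ
      = conf (box d n) (plusBC d) τ j := by
  by_cases hj : j ∈ box d n
  · rw [conf]
    rw [dif_pos hj]
    have hstep : ∀ a : {x // x ∈ box d n},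
        (pm (τ a)) ^ (if (a : Site d) = j then 1 else 0)
          = if a = (⟨j, hj⟩ : {x // x ∈ box d n}) then pm (τ a) else 1 := by
      intro a
      by_cases h : a = (⟨j, hj⟩ : {x // x ∈ box d n})
      · rw [if_pos h, if_pos (by rw [h]), pow_one]
      · rw [if_neg h, if_neg (fun hh => h (Subtype.ext hh)), pow_zero]
    rw [spinProd, Finset.prod_congr rfl (fun a _ => hstep a), Finset.prod_ite_eq']
    simp [pm]
  · rw [conf]
    rw [dif_neg hj, spinProd]
    rw [Finset.prod_congr rfl (fun a (_ : a ∈ Finset.univ) => by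
      rw [if_neg (fun hh : (a : Site d) = j => hj (hh ▸ a.2)), pow_zero])]
    rw [Finset.prod_const_one, plusBC]

lemma self_delta (τ : {x // x ∈ box d n} → Bool) (i : Site d) (hi : i ∈ box d n) :
    conf (box d n) (plusBC d) τ i
      = spinProd (fun a : {x // x ∈ box d n} => if (a : Site d) = i then 1 else 0) τ :=
  (spinProd_delta τ i).symm

lemma energy_eq (J : ℝ) (g : Site d → ℝ) (τ : {x // x ∈ box d n} → Bool) :
    energyH J g (box d n) (conf (box d n) (plusBC d) τ)
      = ∑ k ∈ KK d n, UU d n J g k * spinProd (eK d n k) τ := by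
  rw [KK, Finset.sum_disjSum, Finset.sum_sigma, energyH]
  congr 1
  · rw [Finset.mul_sum]
    refine Finset.sum_congr rfl (fun i hi => ?_)
    rw [Finset.mul_sum, NB]
    refine Finset.sum_congr rfl (fun j hj => ?_)
    have h1 : spinProd (eK d n (Sum.inl ⟨i, j⟩)) τ
        = conf (box d n) (plusBC d) τ i * conf (box d n) (plusBC d) τ j := by
      show spinProd (fun a : {x // x ∈ box d n} =>
        (if (a : Site d) = i then 1 else 0) + (if (a : Site d) = j then 1 else 0)) τ = _
      rw [spinProd_add, spinProd_delta, spinProd_delta]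
    rw [h1]
    show J * ((if j ∈ box d n then (1 : ℝ) / 2 else 1) * _ * _)
      = (J * (if j ∈ box d n then (1 : ℝ) / 2 else 1)) * _
    ring
  · refine Finset.sum_congr rfl (fun i hi => ?_)
    show g i * conf (box d n) (plusBC d) τ i
      = g i * spinProd (eK d n (Sum.inr i)) τ
    rw [← spinProd_delta τ i]
    rfl

lemma ZH_plus_eq (J : ℝ) (g : Site d → ℝ) :
    ZH J g (box d n) (plusBC d)
      = ∑ τ : {x // x ∈ box d n} → Bool,
          Real.exp (∑ k ∈ KK d n, UU d n J g k * spinProd (eK d n k) τ) := by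
  rw [ZH]
  exact Finset.sum_congr rfl (fun τ _ => by rw [energy_eq])

lemma conf_minus (τ : {x // x ∈ box d n} → Bool) :
    conf (box d n) (minusBC d) τ
      = fun i => -(conf (box d n) (plusBC d) (fun a => !(τ a)) i) := by
  funext i
  rw [conf, conf]
  by_cases hi : i ∈ box d n
  · rw [dif_pos hi, dif_pos hi]
    cases τ ⟨i, hi⟩ <;> norm_num
  · rw [dif_neg hi, dif_neg hi, minusBC, plusBC]

lemma energy_neg (J : ℝ) (h : Site d → ℝ) (Λ : Finset (Site d)) (σ : Site d → ℝ) :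
    energyH J h Λ (fun i => -(σ i)) = energyH J (fun i => -(h i)) Λ σ := by
  rw [energyH, energyH]
  congr 1
  · congr 1
    refine Finset.sum_congr rfl (fun i _ => Finset.sum_congr rfl (fun j _ => by ring))
  · exact Finset.sum_congr rfl (fun i _ => by ring)

lemma ZH_minus_eq (J : ℝ) (h : Site d → ℝ) :
    ZH J h (box d n) (minusBC d) = ZH J (fun i => -(h i)) (box d n) (plusBC d) := by
  rw [ZH, ZH]
  have hinv : Function.Involutive
      (fun τ : {x // x ∈ box d n} → Bool => (fun a => !(τ a))) := by
    intro τ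
    funext a
    simp
  calc ∑ τ : {x // x ∈ box d n} → Bool,
        Real.exp (energyH J h (box d n) (conf (box d n) (minusBC d) τ))
      = ∑ τ : {x // x ∈ box d n} → Bool,
        Real.exp (energyH J (fun i => -(h i)) (box d n)
          (conf (box d n) (plusBC d) (fun a => !(τ a)))) := by
        refine Finset.sum_congr rfl (fun τ _ => ?_)
        rw [conf_minus τ, energy_neg]
    _ = _ := Function.Bijective.sum_comp hinv.bijective
        (fun τ => Real.exp (energyH J (fun i => -(h i)) (box d n)
          (conf (box d n) (plusBC d) τ)))

lemma ZH_pos (J : ℝ) (h : Site d → ℝ) (Λ : Finset (Site d)) (b : Site d → ℝ) :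
    0 < ZH J h Λ b :=
  Finset.sum_pos (fun τ _ => Real.exp_pos _) Finset.univ_nonempty

lemma wallSeq_eq (J : ℝ) (h : Site d → ℝ) :
    wallSeq d J h n = (((wall d n).card : ℝ))⁻¹ *
      (Real.log (ZH J h (box d n) (plusBC d)) - Real.log (ZH J h (box d n) (minusBC d))) := by
  rw [wallSeq, Real.log_div (ZH_pos _ _ _ _).ne' (ZH_pos _ _ _ _).ne']
  ring

lemma key1 (J J' : ℝ) (hJ : 0 ≤ J) (hJJ : J ≤ J') (h : Site d → ℝ)
    (hpos : ∀ i ∈ box d n, 0 ≤ h i) :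
    wallSeq d J h n ≤ wallSeq d J' h n := by
  classical
  set sg : Kappa d → Bool := Sum.elim (fun _ => true) (fun _ => false) with hsg
  set W : Kappa d → ℝ := Sum.elim (fun _ => 0) (fun i => h i) with hW
  set V : Kappa d → ℝ :=
    Sum.elim (fun p => if p.2 ∈ box d n then (1 : ℝ) / 2 else 1) (fun _ => 0) with hV
  have hU : ∀ (t : ℝ) (k : Kappa d), W k + t * V k = UU d n t h k := by
    intro t k
    cases k with
    | inl p => simp [hW, hV, UU]
    | inr i => simp [hW, hV, UU]
  have hU' : ∀ (t : ℝ) (k : Kappa d),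
      pm (sg k) * (W k + t * V k) = UU d n t (fun i => -(h i)) k := by
    intro t k
    cases k with
    | inl p => simp [hW, hV, hsg, UU, pm]
    | inr i => simp [hW, hV, hsg, UU, pm]
  have hv : ∀ k ∈ KK d n, 0 ≤ V k := by
    intro k _
    cases k with
    | inl p =>
      simp only [hV, Sum.elim_inl]
      split <;> norm_num
    | inr i => simp [hV]
  have hw : ∀ k ∈ KK d n, ∀ t ∈ Set.Icc J J', 0 ≤ W k + t * V k := by
    intro k hk t htI
    have ht0 : 0 ≤ t := le_trans hJ htI.1
    cases k with
    | inl p =>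
      simp only [hW, hV, Sum.elim_inl, zero_add]
      apply mul_nonneg ht0
      split <;> norm_num
    | inr i =>
      have hib : i ∈ box d n := by
        rw [KK] at hk
        exact Finset.inr_mem_disjSum.mp hk
      simp only [hW, hV, Sum.elim_inr, mul_zero, add_zero]
      exact hpos i hib
  have hmain := logZ_mono (KK d n) (eK d n) sg W V J J' hJJ hv hw
  have hS : ∀ t : ℝ,
      (∑ τ : {x // x ∈ box d n} → Bool,
        Real.exp (∑ k ∈ KK d n, (W k + t * V k) * spinProd (eK d n k) τ))
      = ZH t h (box d n) (plusBC d) := by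
    intro t
    rw [ZH_plus_eq]
    exact Finset.sum_congr rfl (fun τ _ => by
      congr 1
      exact Finset.sum_congr rfl (fun k _ => by rw [hU t k]))
  have hS' : ∀ t : ℝ,
      (∑ τ : {x // x ∈ box d n} → Bool,
        Real.exp (∑ k ∈ KK d n, (pm (sg k) * (W k + t * V k)) * spinProd (eK d n k) τ))
      = ZH t h (box d n) (minusBC d) := by
    intro t
    rw [ZH_minus_eq, ZH_plus_eq]
    exact Finset.sum_congr rfl (fun τ _ => by
      congr 1
      exact Finset.sum_congr rfl (fun k _ => by rw [hU' t k]))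
  rw [hS J, hS J', hS' J, hS' J'] at hmain
  rw [wallSeq_eq, wallSeq_eq]
  exact mul_le_mul_of_nonneg_left hmain (inv_nonneg.mpr (Nat.cast_nonneg _))

set_option maxHeartbeats 2000000 in
lemma key2 (J : ℝ) (hJ : 0 ≤ J) (h h' : Site d → ℝ)
    (hpos : ∀ i ∈ box d n, 0 ≤ h i) (hle : ∀ i ∈ box d n, h i ≤ h' i) :
    wallSeq d J h n ≤ wallSeq d J h' n := by
  classical
  set sg : Kappa d → Bool := Sum.elim (fun _ => true) (fun _ => false) with hsg
  set W : Kappa d → ℝ :=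
    Sum.elim (fun p => J * (if p.2 ∈ box d n then (1 : ℝ) / 2 else 1)) (fun i => h i) with hW
  set V : Kappa d → ℝ := Sum.elim (fun _ => 0) (fun i => h' i - h i) with hV
  have hU0 : ∀ k : Kappa d, W k + 0 * V k = UU d n J h k := by
    intro k
    cases k with
    | inl p => simp [hW, hV, UU]
    | inr i => simp [hW, hV, UU]
  have hU1 : ∀ k : Kappa d, W k + 1 * V k = UU d n J h' k := by
    intro k
    cases k with
    | inl p => simp [hW, hV, UU]
    | inr i => simp [hW, hV, UU]
  have hU0' : ∀ k : Kappa d, pm (sg k) * (W k + 0 * V k) = UU d n J (fun i => -(h i)) k := by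
    intro k
    cases k with
    | inl p => simp [hW, hV, hsg, UU, pm]
    | inr i => simp [hW, hV, hsg, UU, pm]
  have hU1' : ∀ k : Kappa d, pm (sg k) * (W k + 1 * V k) = UU d n J (fun i => -(h' i)) k := by
    intro k
    cases k with
    | inl p => simp [hW, hV, hsg, UU, pm]
    | inr i => simp [hW, hV, hsg, UU, pm]
  have hv : ∀ k ∈ KK d n, 0 ≤ V k := by
    intro k hk
    cases k with
    | inl p => simp [hV]
    | inr i =>
      have hib : i ∈ box d n := by
        rw [KK] at hk
        exact Finset.inr_mem_disjSum.mp hk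
      simp only [hV, Sum.elim_inr, sub_nonneg]
      exact hle i hib
  have hw : ∀ k ∈ KK d n, ∀ t ∈ Set.Icc (0:ℝ) 1, 0 ≤ W k + t * V k := by
    intro k hk t htI
    cases k with
    | inl p =>
      simp only [hW, hV, Sum.elim_inl, mul_zero, add_zero]
      apply mul_nonneg hJ
      split <;> norm_num
    | inr i =>
      have hib : i ∈ box d n := by
        rw [KK] at hk
        exact Finset.inr_mem_disjSum.mp hk
      simp only [hW, hV, Sum.elim_inl, Sum.elim_inr]
      have h1 := hpos i hib
      have h2 := hle i hib
      nlinarith [htI.1, htI.2]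
  have hmain := logZ_mono (KK d n) (eK d n) sg W V 0 1 zero_le_one hv hw
  have hS0 : (∑ τ : {x // x ∈ box d n} → Bool,
        Real.exp (∑ k ∈ KK d n, (W k + 0 * V k) * spinProd (eK d n k) τ))
      = ZH J h (box d n) (plusBC d) := by
    rw [ZH_plus_eq]
    exact Finset.sum_congr rfl (fun τ _ => by
      congr 1
      exact Finset.sum_congr rfl (fun k _ => by rw [hU0 k]))
  have hS1 : (∑ τ : {x // x ∈ box d n} → Bool,
        Real.exp (∑ k ∈ KK d n, (W k + 1 * V k) * spinProd (eK d n k) τ))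
      = ZH J h' (box d n) (plusBC d) := by
    rw [ZH_plus_eq]
    exact Finset.sum_congr rfl (fun τ _ => by
      congr 1
      exact Finset.sum_congr rfl (fun k _ => by rw [hU1 k]))
  have hS0' : (∑ τ : {x // x ∈ box d n} → Bool,
        Real.exp (∑ k ∈ KK d n, (pm (sg k) * (W k + 0 * V k)) * spinProd (eK d n k) τ))
      = ZH J h (box d n) (minusBC d) := by
    rw [ZH_minus_eq, ZH_plus_eq]
    exact Finset.sum_congr rfl (fun τ _ => by
      congr 1
      exact Finset.sum_congr rfl (fun k _ => by rw [hU0' k]))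
  have hS1' : (∑ τ : {x // x ∈ box d n} → Bool,
        Real.exp (∑ k ∈ KK d n, (pm (sg k) * (W k + 1 * V k)) * spinProd (eK d n k) τ))
      = ZH J h' (box d n) (minusBC d) := by
    rw [ZH_minus_eq, ZH_plus_eq]
    exact Finset.sum_congr rfl (fun τ _ => by
      congr 1
      exact Finset.sum_congr rfl (fun k _ => by rw [hU1' k]))
  rw [hS0, hS1, hS0', hS1'] at hmain
  rw [wallSeq_eq, wallSeq_eq]
  exact mul_le_mul_of_nonneg_left hmain (inv_nonneg.mpr (Nat.cast_nonneg _))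

lemma box_pos {i : Site d} (hi : i ∈ box d n) : 1 ≤ i.2.toNat := by
  have h2 : i.2 ∈ Finset.Icc (1 : ℤ) (n : ℤ) := (Finset.mem_product.mp hi).2
  have h3 := (Finset.mem_Icc.mp h2).1
  omega

end Application

end WFE

/-- Monotonicity of the wall free energy: it is non-decreasing
in the coupling `J` and in the (summable, positive) inducing sequence `(h_ℓ)_{ℓ≥1}`.
The wall free energies are described as the limits of the finite-volume sequences
`wallSeq`. -/
theorem wall_free_energy_monotone (d : ℕ) (hd : 2 ≤ d) :
    (∀ (J J' : ℝ) (hseq : ℕ → ℝ), 0 ≤ J → J ≤ J' →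
      Summable hseq → (∀ ℓ : ℕ, 1 ≤ ℓ → 0 < hseq ℓ) →
      ∀ τ τ' : ℝ,
        Filter.Tendsto (wallSeq d J (fun i => hseq i.2.toNat)) Filter.atTop (nhds τ) →
        Filter.Tendsto (wallSeq d J' (fun i => hseq i.2.toNat)) Filter.atTop (nhds τ') →
        τ ≤ τ') ∧
    (∀ (J : ℝ) (hseq hseq' : ℕ → ℝ), 0 ≤ J →
      Summable hseq → Summable hseq' →
      (∀ ℓ : ℕ, 1 ≤ ℓ → 0 < hseq ℓ) → (∀ ℓ : ℕ, 1 ≤ ℓ → 0 < hseq' ℓ) →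
      (∀ ℓ : ℕ, 1 ≤ ℓ → hseq ℓ ≤ hseq' ℓ) →
      ∀ τ τ' : ℝ,
        Filter.Tendsto (wallSeq d J (fun i => hseq i.2.toNat)) Filter.atTop (nhds τ) →
        Filter.Tendsto (wallSeq d J (fun i => hseq' i.2.toNat)) Filter.atTop (nhds τ') →
        τ ≤ τ') := by
  constructor
  · intro J J' hseq hJ hJJ _ hpos τ τ' hT hT'
    refine le_of_tendsto_of_tendsto' hT hT' (fun n => ?_)
    exact WFE.key1 J J' hJ hJJ _ (fun i hi => (hpos _ (WFE.box_pos hi)).le)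
  · intro J hseq hseq' hJ _ _ hpos hpos' hle τ τ' hT hT'
    refine le_of_tendsto_of_tendsto' hT hT' (fun n => ?_)
    exact WFE.key2 J hJ _ _ (fun i hi => (hpos _ (WFE.box_pos hi)).le)
      (fun i hi => hle _ (WFE.box_pos hi))
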